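/- Let W be a group generated by a finite set S of involutions, and let ℓ be the word length on W with respect to S. Suppose the folding condition holds: for all γ ∈ W and s, t ∈ S with ℓ(sγ) = ℓ(γ) + 1 and ℓ(γt) = ℓ(γ) + 1, either ℓ(sγt) = ℓ(γ) + 2 or sγt = γ. Then (W, S) is a Coxeter system. -/

import Mathlib

open Metric Set

variable {X : Type*} [MetricSpace X]

/-- `ξ` is a geodesic from `x` to `y`: an isometric embedding of `[0, d(x,y)]`. -/
def IsGeodesicMap (x y : X) (ξ : ℝ → X) : Prop :=
  ξ 0 = x ∧ ξ (dist x y) = y ∧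
    ∀ s ∈ Set.Icc (0 : ℝ) (dist x y), ∀ t ∈ Set.Icc (0 : ℝ) (dist x y),
      dist (ξ s) (ξ t) = |s - t|

/-- `X` is a geodesic space. -/
def GeodesicSpace (X : Type*) [MetricSpace X] : Prop :=
  ∀ x y : X, ∃ ξ : ℝ → X, IsGeodesicMap x y ξ

/-- A set is (geodesically) convex if it contains every geodesic between its points. -/
def GeodConvex (C : Set X) : Prop :=
  ∀ x ∈ C, ∀ y ∈ C, ∀ ξ : ℝ → X, IsGeodesicMap x y ξ →
    ∀ t ∈ Set.Icc (0 : ℝ) (dist x y), ξ t ∈ C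

/-- The wall (fixed-point set) of an isometry. -/
def wall (r : X ≃ᵢ X) : Set X := {x : X | r x = x}

/-- `r` is a reflection with half-spaces `Xp` and `Xm`: `r` is an involution, the wall has
empty interior, and the complement of the wall has exactly the two convex connected
components `Xp` and `Xm`. -/
def IsReflectionWith (r : X ≃ᵢ X) (Xp Xm : Set X) : Prop :=
  (∀ x, r (r x) = x) ∧ interior (wall r) = ∅ ∧
    Xp.Nonempty ∧ Xm.Nonempty ∧ Xp ≠ Xm ∧ GeodConvex Xp ∧ GeodConvex Xm ∧
    Xp ∪ Xm = (wall r)ᶜ ∧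
    ∀ x ∈ (wall r)ᶜ,
      connectedComponentIn (wall r)ᶜ x = Xp ∨ connectedComponentIn (wall r)ᶜ x = Xm

/-- `r` is a reflection of `X`. -/
def IsReflection (r : X ≃ᵢ X) : Prop := ∃ Xp Xm, IsReflectionWith r Xp Xm

/-- The set of reflections lying in a group `Γ` of isometries of `X`. -/
def reflections (Γ : Subgroup (X ≃ᵢ X)) : Set (X ≃ᵢ X) :=
  {r : X ≃ᵢ X | r ∈ Γ ∧ IsReflection r}

/-- The action of `Γ` on `X` is proper. -/
def ProperAction (Γ : Subgroup (X ≃ᵢ X)) : Prop :=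
  ∀ (x : X) (N : ℝ), 0 < N → {γ : X ≃ᵢ X | γ ∈ Γ ∧ dist (γ x) x ≤ N}.Finite

/-- `Γ` is a reflection group: it is generated by a set of reflections of `X`. -/
def IsReflectionGroup (Γ : Subgroup (X ≃ᵢ X)) : Prop :=
  ∃ R₀ ⊆ {r : X ≃ᵢ X | IsReflection r}, Subgroup.closure R₀ = Γ

/-- The complement of the union of all walls of reflections in `Γ`. -/
def chamberComplement (Γ : Subgroup (X ≃ᵢ X)) : Set X :=
  (⋃ r ∈ reflections Γ, wall r)ᶜ

/-- `C` is a chamber: a connected component of the complement of the union of the walls. -/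
def IsChamber (Γ : Subgroup (X ≃ᵢ X)) (C : Set X) : Prop :=
  ∃ x ∈ chamberComplement Γ, C = connectedComponentIn (chamberComplement Γ) x

/-- For each reflection `r ∈ Γ`, `Xp r` and `Xm r` are the two half-spaces of `r`,
`Xp r` being the one containing the chamber `C`. -/
def HalfSpaces (Γ : Subgroup (X ≃ᵢ X)) (C : Set X) (Xp Xm : (X ≃ᵢ X) → Set X) : Prop :=
  ∀ r ∈ reflections Γ, IsReflectionWith r (Xp r) (Xm r) ∧ C ⊆ Xp r

/-- `Γ` is a cocompact discrete reflection group of `X` with chamber `C`. -/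
def CocompactDiscrete (Γ : Subgroup (X ≃ᵢ X)) (C : Set X) : Prop :=
  IsReflectionGroup Γ ∧ ProperAction Γ ∧ IsChamber Γ C ∧
    IsCompact (closure C) ∧ ∀ γ : X ≃ᵢ X, γ ∈ Γ → γ '' C = C → γ = 1

/-- `S` is a minimal set of reflections in `Γ` with `C = ⋂ s ∈ S, Xp s`. -/
def MinimalHalfSpaceSet (Γ : Subgroup (X ≃ᵢ X)) (C : Set X)
    (Xp : (X ≃ᵢ X) → Set X) (S : Set (X ≃ᵢ X)) : Prop :=
  S ⊆ reflections Γ ∧ C = ⋂ s ∈ S, Xp s ∧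
    ∀ s₀ ∈ S, C ≠ ⋂ s ∈ S \ {s₀}, Xp s

/-- `n` is the word length of `γ` with respect to the generating set `S`. -/
def IsWordLength {G : Type*} [Group G] (S : Set G) (γ : G) (n : ℕ) : Prop :=
  (∃ l : List G, (∀ g ∈ l, g ∈ S) ∧ l.prod = γ ∧ l.length = n) ∧
    ∀ l : List G, (∀ g ∈ l, g ∈ S) → l.prod = γ → n ≤ l.length

/-- `(W, S)` is a Coxeter system. -/
def IsCoxeterSystemOn (W : Type*) [Group W] (S : Set W) : Prop :=
  ∃ (B : Type) (M : CoxeterMatrix B) (cs : CoxeterSystem M W),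
    Set.range cs.simple = S


namespace CoxFold

variable {W : Type*} [Group W]

/-- product of a word over the subtype of `S`. -/
def sp (S : Set W) (l : List ↥S) : W := (l.map Subtype.val).prod

@[simp] theorem sp_nil (S : Set W) : sp S [] = 1 := rfl

@[simp] theorem sp_cons (S : Set W) (i : ↥S) (l : List ↥S) :
    sp S (i :: l) = (i : W) * sp S l := by simp [sp]

theorem sp_append (S : Set W) (l l' : List ↥S) : sp S (l ++ l') = sp S l * sp S l' := by
  simp [sp]

/-- word length -/
noncomputable def lenw (S : Set W) (w : W) : ℕ :=
  sInf {n | ∃ l : List ↥S, sp S l = w ∧ l.length = n}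

section basic

variable {S : Set W} (hinv : ∀ s ∈ S, s * s = 1 ∧ s ≠ 1)
  (hgen : Subgroup.closure S = ⊤)
include hinv hgen
set_option linter.unusedSectionVars false

theorem si_mul_self (i : ↥S) : (i : W) * i = 1 := (hinv i i.2).1

theorem si_inv (i : ↥S) : (i : W)⁻¹ = i := by
  rw [inv_eq_iff_mul_eq_one]; exact si_mul_self hinv hgen i

theorem sp_reverse (l : List ↥S) : sp S l.reverse = (sp S l)⁻¹ := by
  induction l with
  | nil => simp
  | cons i l ih =>
      rw [List.reverse_cons, sp_append, sp_cons, ih]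
      simp [si_inv hinv hgen i]

theorem exists_word (w : W) : ∃ l : List ↥S, sp S l = w := by
  have hw : w ∈ Subgroup.closure S := by rw [hgen]; trivial
  induction hw using Subgroup.closure_induction with
  | mem s hs => exact ⟨[⟨s, hs⟩], by simp⟩
  | one => exact ⟨[], rfl⟩
  | mul x y _ _ hx hy =>
      obtain ⟨l₁, rfl⟩ := hx; obtain ⟨l₂, rfl⟩ := hy
      exact ⟨l₁ ++ l₂, sp_append S l₁ l₂⟩
  | inv x _ hx =>
      obtain ⟨l, rfl⟩ := hx
      exact ⟨l.reverse, sp_reverse hinv hgen l⟩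

theorem lenw_exists (w : W) : ∃ l : List ↥S, sp S l = w ∧ l.length = lenw S w := by
  have hne : {n | ∃ l : List ↥S, sp S l = w ∧ l.length = n}.Nonempty := by
    obtain ⟨l, hl⟩ := exists_word hinv hgen w
    exact ⟨l.length, l, hl, rfl⟩
  exact Nat.sInf_mem hne

omit hinv hgen in
theorem lenw_le (l : List ↥S) : lenw S (sp S l) ≤ l.length :=
  Nat.sInf_le ⟨l, rfl, rfl⟩

omit hinv hgen in
theorem lenw_le' {w : W} (l : List ↥S) (h : sp S l = w) : lenw S w ≤ l.length :=
  h ▸ lenw_le l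

omit hinv hgen in
@[simp] theorem lenw_one : lenw S (1 : W) = 0 :=
  Nat.le_zero.mp (lenw_le' ([] : List ↥S) rfl)

theorem lenw_eq_zero {w : W} (h : lenw S w = 0) : w = 1 := by
  obtain ⟨l, hl, hlen⟩ := lenw_exists hinv hgen w
  rw [h, List.length_eq_zero_iff] at hlen
  rw [← hl, hlen, sp_nil]

theorem lenw_mul_le (i : ↥S) (w : W) : lenw S ((i : W) * w) ≤ lenw S w + 1 := by
  obtain ⟨l, hl, hlen⟩ := lenw_exists hinv hgen w
  have := lenw_le' (S := S) (i :: l) (by rw [sp_cons, hl])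
  simpa [hlen] using this

theorem lenw_le_mul (i : ↥S) (w : W) : lenw S w ≤ lenw S ((i : W) * w) + 1 := by
  have := lenw_mul_le hinv hgen i ((i : W) * w)
  rwa [← mul_assoc, si_mul_self hinv hgen i, one_mul] at this

theorem lenw_mul_right_le (i : ↥S) (w : W) : lenw S (w * i) ≤ lenw S w + 1 := by
  obtain ⟨l, hl, hlen⟩ := lenw_exists hinv hgen w
  have := lenw_le' (S := S) (w := w * (i : W)) (l ++ [i]) (by simp [sp_append, hl])
  simpa [hlen] using this

theorem lenw_le_mul_right (i : ↥S) (w : W) : lenw S w ≤ lenw S (w * i) + 1 := by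
  have := lenw_mul_right_le hinv hgen i (w * (i : W))
  rwa [mul_assoc, si_mul_self hinv hgen i, mul_one] at this

/-- conversion to the `IsWordLength` statement of the problem. -/
theorem isWordLength_iff (w : W) (n : ℕ) :
    ((∃ l : List W, (∀ g ∈ l, g ∈ S) ∧ l.prod = w ∧ l.length = n) ∧
      ∀ l : List W, (∀ g ∈ l, g ∈ S) → l.prod = w → n ≤ l.length) ↔ n = lenw S w := by
  have key : ∀ m : W, ∀ k : ℕ,
      (∃ l : List W, (∀ g ∈ l, g ∈ S) ∧ l.prod = m ∧ l.length = k) ↔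
      (∃ l : List ↥S, sp S l = m ∧ l.length = k) := by
    intro m k
    constructor
    · rintro ⟨l, hmem, hprod, hlen⟩
      refine ⟨l.attach.map (fun x => (⟨x.1, hmem x.1 x.2⟩ : ↥S)), ?_, by simp [hlen]⟩
      rw [sp, List.map_map]
      simpa [List.attach_map_val] using hprod
    · rintro ⟨l, hprod, hlen⟩
      exact ⟨l.map Subtype.val, by rintro g hg; rw [List.mem_map] at hg; obtain ⟨a, -, rfl⟩ := hg; exact a.2, hprod, by simp [hlen]⟩
  constructor
  · rintro ⟨⟨l, hl⟩, hmin⟩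
    have h1 : lenw S w ≤ n := by
      obtain ⟨l', h1, h2⟩ := (key w n).mp ⟨l, hl⟩
      exact h2 ▸ lenw_le' l' h1
    have h2 : n ≤ lenw S w := by
      obtain ⟨l', h1, h2⟩ := lenw_exists hinv hgen w
      obtain ⟨l'', hmem, hprod, hlen⟩ := (key w (lenw S w)).mpr ⟨l', h1, h2⟩
      exact hlen ▸ hmin l'' hmem hprod
    omega
  · rintro rfl
    constructor
    · exact (key w _).mpr (lenw_exists hinv hgen w)
    · intro l hmem hprod
      obtain ⟨l', h1, h2⟩ := (key w l.length).mp ⟨l, hmem, hprod, rfl⟩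
      exact h2 ▸ lenw_le' l' h1

end basic

end CoxFold

namespace CoxFold
section fold

variable {W : Type*} [Group W] {S : Set W}
  (hinv : ∀ s ∈ S, s * s = 1 ∧ s ≠ 1)
  (hgen : Subgroup.closure S = ⊤)
  (hfold : ∀ γ : W, ∀ s ∈ S, ∀ t ∈ S, ∀ n : ℕ,
      (((∃ l : List W, (∀ g ∈ l, g ∈ S) ∧ l.prod = γ ∧ l.length = n) ∧
        ∀ l : List W, (∀ g ∈ l, g ∈ S) → l.prod = γ → n ≤ l.length)) →
      (((∃ l : List W, (∀ g ∈ l, g ∈ S) ∧ l.prod = s * γ ∧ l.length = n + 1) ∧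
        ∀ l : List W, (∀ g ∈ l, g ∈ S) → l.prod = s * γ → n + 1 ≤ l.length)) →
      (((∃ l : List W, (∀ g ∈ l, g ∈ S) ∧ l.prod = γ * t ∧ l.length = n + 1) ∧
        ∀ l : List W, (∀ g ∈ l, g ∈ S) → l.prod = γ * t → n + 1 ≤ l.length)) →
      (((∃ l : List W, (∀ g ∈ l, g ∈ S) ∧ l.prod = s * γ * t ∧ l.length = n + 2) ∧
        ∀ l : List W, (∀ g ∈ l, g ∈ S) → l.prod = s * γ * t → n + 2 ≤ l.length)) ∨
      s * γ * t = γ)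
include hinv hgen hfold
set_option linter.unusedSectionVars false

theorem fold' (w : W) (i j : ↥S)
    (h1 : lenw S ((i : W) * w) = lenw S w + 1)
    (h2 : lenw S (w * (j : W)) = lenw S w + 1) :
    lenw S ((i : W) * w * j) = lenw S w + 2 ∨ (i : W) * w * j = w := by
  have := hfold w i i.2 j j.2 (lenw S w)
    ((isWordLength_iff hinv hgen w (lenw S w)).mpr rfl)
    ((isWordLength_iff hinv hgen ((i : W) * w) (lenw S w + 1)).mpr h1.symm)
    ((isWordLength_iff hinv hgen (w * (j : W)) (lenw S w + 1)).mpr h2.symm)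
  rcases this with h | h
  · exact Or.inl ((isWordLength_iff hinv hgen _ _).mp h).symm
  · exact Or.inr h

theorem lenw_mul_ne : ∀ n : ℕ, ∀ w : W, lenw S w = n → ∀ i : ↥S, lenw S ((i : W) * w) ≠ n := by
  intro n
  induction n using Nat.strong_induction_on with
  | _ n IH =>
    intro w hw i hcon
    match n with
    | 0 =>
        have hw1 : w = 1 := lenw_eq_zero hinv hgen hw
        have : (i : W) = 1 := by
          have := lenw_eq_zero hinv hgen (by simpa [hw1] using hcon)
          simpa [hw1] using this
        exact (hinv i i.2).2 this
    | (m + 1) =>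
        obtain ⟨l, hl, hlen⟩ := lenw_exists hinv hgen w
        rcases List.eq_nil_or_concat l with rfl | ⟨l', t, rfl⟩
        · simp [hw] at hlen
        · set γ' := sp S l' with hγ'
          have hwγ : w = γ' * t := by rw [← hl, List.concat_eq_append, sp_append]; simp; rfl
          have hlen' : l'.length = m := by simpa [hw] using hlen
          have hγ'm : lenw S γ' = m := by
            have h1 : lenw S γ' ≤ m := hlen' ▸ lenw_le l'
            have h2 : lenw S w ≤ lenw S γ' + 1 := hwγ ▸ lenw_mul_right_le hinv hgen t γ'
            omega
          have hne : lenw S ((i : W) * γ') ≠ m := IH m (by omega) γ' hγ'm i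
          have hub : lenw S ((i : W) * γ') ≤ m + 1 := hγ'm ▸ lenw_mul_le hinv hgen i γ'
          rcases lt_or_gt_of_ne hne with hlt | hgt
          · -- short case : lenw (i γ') < m
            have : lenw S ((i : W) * w) ≤ m := by
              have := lenw_mul_right_le hinv hgen t ((i : W) * γ')
              rw [hwγ, ← mul_assoc]
              omega
            omega
          · have heq : lenw S ((i : W) * γ') = m + 1 := by omega
            rcases fold' hinv hgen hfold γ' i t (by omega) (by rw [← hwγ]; omega) with h | h
            · rw [mul_assoc, ← hwγ] at h; omega
            · rw [mul_assoc, ← hwγ] at h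
              have : lenw S ((i : W) * w) = m := by rw [h]; exact hγ'm
              omega

theorem lenw_mul_right_ne : ∀ n : ℕ, ∀ w : W, lenw S w = n → ∀ j : ↥S,
    lenw S (w * (j : W)) ≠ n := by
  intro n
  induction n using Nat.strong_induction_on with
  | _ n IH =>
    intro w hw j hcon
    match n with
    | 0 =>
        have hw1 : w = 1 := lenw_eq_zero hinv hgen hw
        have : (j : W) = 1 := by
          have := lenw_eq_zero hinv hgen (by simpa [hw1] using hcon)
          simpa [hw1] using this
        exact (hinv j j.2).2 this
    | (m + 1) =>
        obtain ⟨l, hl, hlen⟩ := lenw_exists hinv hgen w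
        match l with
        | [] => simp [hw] at hlen
        | t :: l' =>
          set γ' := sp S l' with hγ'
          have hwγ : w = (t : W) * γ' := by rw [← hl, sp_cons]
          have hlen' : l'.length = m := by simpa [hw] using hlen
          have hγ'm : lenw S γ' = m := by
            have h1 : lenw S γ' ≤ m := hlen' ▸ lenw_le l'
            have h2 : lenw S w ≤ lenw S γ' + 1 := hwγ ▸ lenw_mul_le hinv hgen t γ'
            omega
          have hne : lenw S (γ' * (j : W)) ≠ m := IH m (by omega) γ' hγ'm j
          have hub : lenw S (γ' * (j : W)) ≤ m + 1 := hγ'm ▸ lenw_mul_right_le hinv hgen j γ'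
          rcases lt_or_gt_of_ne hne with hlt | hgt
          · have : lenw S (w * (j : W)) ≤ m := by
              have := lenw_mul_le hinv hgen t (γ' * (j : W))
              rw [hwγ, mul_assoc]
              omega
            omega
          · have heq : lenw S (γ' * (j : W)) = m + 1 := by omega
            rcases fold' hinv hgen hfold γ' t j (by rw [← hwγ]; omega) (by omega) with h | h
            · rw [← hwγ] at h; omega
            · rw [← hwγ] at h
              have : lenw S (w * (j : W)) = m := by rw [h]; exact hγ'm
              omega

/-- The exchange condition. -/
theorem exchange : ∀ l : List ↥S, ∀ i : ↥S, l.length = lenw S (sp S l) →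
    lenw S ((i : W) * sp S l) < lenw S (sp S l) →
    ∃ a x b, l = a ++ x :: b ∧ (i : W) * sp S l = sp S (a ++ b) := by
  intro l
  induction l using List.reverseRecOn with
  | nil => intro i h1 h2; simp at h2
  | append_singleton l' t IH =>
    intro i hred hdesc
    set w := sp S (l' ++ [t]) with hw
    set γ' := sp S l' with hγ'
    have hwγ : w = γ' * t := by rw [hw, sp_append]; simp; rfl
    have hlw : lenw S w = l'.length + 1 := by simpa using hred.symm
    have hγ'red : l'.length = lenw S γ' := by
      have h1 : lenw S γ' ≤ l'.length := lenw_le l'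
      have h2 : lenw S w ≤ lenw S γ' + 1 := hwγ ▸ lenw_mul_right_le hinv hgen t γ'
      omega
    have hne : lenw S ((i : W) * γ') ≠ lenw S γ' := lenw_mul_ne hinv hgen hfold _ γ' rfl i
    have hub : lenw S ((i : W) * γ') ≤ lenw S γ' + 1 := lenw_mul_le hinv hgen i γ'
    rcases lt_or_gt_of_ne hne with hlt | hgt
    · obtain ⟨a, x, b, hsplit, hprod⟩ := IH i hγ'red hlt
      refine ⟨a, x, b ++ [t], by rw [hsplit]; simp, ?_⟩
      rw [hwγ, ← mul_assoc, hprod, ← List.append_assoc, sp_append, sp_append]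
      simp [sp_append]
    · have heq : lenw S ((i : W) * γ') = lenw S γ' + 1 := by omega
      rcases fold' hinv hgen hfold γ' i t heq (by rw [← hwγ]; omega) with h | h
      · rw [mul_assoc, ← hwγ] at h; omega
      · refine ⟨l', t, [], by simp, ?_⟩
        rw [hwγ, ← mul_assoc, h]
        simp [hγ']

end fold
end CoxFold

namespace CoxFold

variable {W : Type*} [Group W]

/-- alternating word starting with `c` of length `k` -/
def altP {S : Set W} (c c' : ↥S) : ℕ → List ↥S
  | 0 => []
  | k + 1 => c :: altP c' c k

@[simp] theorem altP_zero {S : Set W} (c c' : ↥S) : altP c c' 0 = [] := rfl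

theorem altP_succ {S : Set W} (c c' : ↥S) (k : ℕ) :
    altP c c' (k + 1) = c :: altP c' c k := rfl

@[simp] theorem altP_length {S : Set W} (c c' : ↥S) (k : ℕ) : (altP c c' k).length = k := by
  induction k generalizing c c' with
  | zero => rfl
  | succ k ih => simp [altP_succ, ih]

theorem altP_take {S : Set W} : ∀ (k r : ℕ), k ≤ r → ∀ (c c' : ↥S),
    (altP c c' r).take k = altP c c' k := by
  intro k
  induction k with
  | zero => simp
  | succ k ih =>
    intro r hkr c c'
    match r with
    | r' + 1 =>
      rw [altP_succ, altP_succ, List.take_succ_cons, ih r' (by omega) c' c]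

/-- alternating products in any group -/
def qp {S : Set W} {G : Type*} [Group G] (g : ↥S → G) (c c' : ↥S) (k : ℕ) : G :=
  ((altP c c' k).map g).prod

@[simp] theorem qp_zero {S : Set W} {G : Type*} [Group G] (g : ↥S → G) (c c' : ↥S) :
    qp g c c' 0 = 1 := rfl

theorem qp_succ {S : Set W} {G : Type*} [Group G] (g : ↥S → G) (c c' : ↥S) (k : ℕ) :
    qp g c c' (k + 1) = g c * qp g c' c k := by simp [qp, altP_succ]

theorem qp_mul_inv {S : Set W} {G : Type*} [Group G] {g : ↥S → G}
    (hg : ∀ x, g x * g x = 1) : ∀ (k : ℕ) (c c' : ↥S),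
    qp g c c' k * (qp g c' c k)⁻¹ = (g c * g c') ^ k := by
  intro k
  induction k with
  | zero => simp
  | succ k ih =>
    intro c c'
    have hinv : ∀ x, (g x)⁻¹ = g x := fun x => inv_eq_of_mul_eq_one_right (hg x)
    have hsemi : SemiconjBy (g c) (g c' * g c) (g c * g c') := (mul_assoc (g c) (g c') (g c)).symm
    have hshift : ∀ m : ℕ, g c * (g c' * g c) ^ m = (g c * g c') ^ m * g c :=
      fun m => (hsemi.pow_right m).eq
    rw [qp_succ, qp_succ, mul_inv_rev, hinv c']
    calc g c * qp g c' c k * ((qp g c c' k)⁻¹ * g c')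
        = g c * (qp g c' c k * (qp g c c' k)⁻¹) * g c' := by group
      _ = g c * (g c' * g c) ^ k * g c' := by rw [ih c' c]
      _ = (g c * g c') ^ k * (g c * g c') := by rw [hshift]; group
      _ = (g c * g c') ^ (k + 1) := by rw [pow_succ]

theorem qp_eq_of_pow_eq_one {S : Set W} {G : Type*} [Group G] {g : ↥S → G}
    (hg : ∀ x, g x * g x = 1) {c c' : ↥S} {m : ℕ} (h : (g c * g c') ^ m = 1) :
    qp g c c' m = qp g c' c m := by
  have := qp_mul_inv hg m c c'
  rw [h] at this
  exact mul_inv_eq_one.mp this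

theorem sp_altP (S : Set W) (c c' : ↥S) (k : ℕ) :
    sp S (altP c c' k) = qp (fun x => (x : W)) c c' k := rfl

section growth

variable {S : Set W}
  (hinv : ∀ s ∈ S, s * s = 1 ∧ s ≠ 1)
  (hgen : Subgroup.closure S = ⊤)
  (hfold : ∀ γ : W, ∀ s ∈ S, ∀ t ∈ S, ∀ n : ℕ,
      (((∃ l : List W, (∀ g ∈ l, g ∈ S) ∧ l.prod = γ ∧ l.length = n) ∧
        ∀ l : List W, (∀ g ∈ l, g ∈ S) → l.prod = γ → n ≤ l.length)) →
      (((∃ l : List W, (∀ g ∈ l, g ∈ S) ∧ l.prod = s * γ ∧ l.length = n + 1) ∧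
        ∀ l : List W, (∀ g ∈ l, g ∈ S) → l.prod = s * γ → n + 1 ≤ l.length)) →
      (((∃ l : List W, (∀ g ∈ l, g ∈ S) ∧ l.prod = γ * t ∧ l.length = n + 1) ∧
        ∀ l : List W, (∀ g ∈ l, g ∈ S) → l.prod = γ * t → n + 1 ≤ l.length)) →
      (((∃ l : List W, (∀ g ∈ l, g ∈ S) ∧ l.prod = s * γ * t ∧ l.length = n + 2) ∧
        ∀ l : List W, (∀ g ∈ l, g ∈ S) → l.prod = s * γ * t → n + 2 ≤ l.length)) ∨
      s * γ * t = γ)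
include hinv hgen hfold
set_option linter.unusedSectionVars false

theorem grow (c c' : ↥S) (r : ℕ) (suff : List ↥S) (w : W)
    (hw : sp S (altP c c' r ++ suff) = w)
    (hlen : (altP c c' r ++ suff).length = lenw S w)
    (hdesc : lenw S ((c' : W) * w) < lenw S w)
    (hr : r < orderOf ((c : W) * c') ∨ orderOf ((c : W) * c') = 0) :
    ∃ suff' : List ↥S, sp S (altP c' c (r + 1) ++ suff') = w ∧
      (altP c' c (r + 1) ++ suff').length = lenw S w := by
  have hred : (altP c c' r ++ suff).length = lenw S (sp S (altP c c' r ++ suff)) := by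
    rw [hw]; exact hlen
  obtain ⟨a, x, b, hsplit, hprod⟩ := exchange hinv hgen hfold (altP c c' r ++ suff) c'
    hred (by rw [hw]; exact hdesc)
  rw [hw] at hprod
  -- case analysis on where the deleted letter is
  rcases List.append_eq_append_iff.mp hsplit.symm with ⟨u, hu1, hu2⟩ | ⟨u, hu1, hu2⟩
  · -- deleted letter inside the prefix (or at its boundary)
    rcases u with _ | ⟨y, u'⟩
    · -- x :: b = suff : deletion at the start of the suffix
      rw [List.append_nil] at hu1
      refine ⟨b, ?_, ?_⟩
      · rw [altP_succ, List.cons_append, sp_cons, hu1, ← hprod, ← mul_assoc,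
          si_mul_self hinv hgen c', one_mul]
      · have h1 := congrArg List.length hsplit
        have h2 := congrArg List.length hu1
        simp only [List.length_append, List.length_cons, altP_length] at h1 h2 hlen ⊢
        omega
    · -- deletion strictly inside the prefix: contradiction
      exfalso
      rw [List.cons_append] at hu2
      injection hu2 with hxy hbu
      subst hxy
      subst hbu
      set k := a.length with hk
      have hkr : k + 1 ≤ r := by
        have := congrArg List.length hu1
        simp at this
        omega
      have ha : a = altP c c' k := by
        have h1 : (altP c c' r).take k = a := by
          rw [hu1]; exact List.take_left' hk.symm
        rw [← h1, altP_take k r (by omega)]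
      have hax : a ++ [x] = altP c c' (k + 1) := by
        have h1 : (altP c c' r).take (k + 1) = a ++ [x] := by
          have h2 : a ++ x :: u' = (a ++ [x]) ++ u' := by simp
          rw [hu1, h2]
          exact List.take_left' (by simp [← hk])
        rw [← h1, altP_take (k + 1) r (by omega)]
      -- the key equation : c' * sp (a ++ [x]) = sp a
      have hkey : (c' : W) * (sp S a * (x : W)) = sp S a := by
        have e2 : (c' : W) * (sp S a * ((x : W) * (sp S u' * sp S suff)))
            = sp S a * (sp S u' * sp S suff) := by
          have h := hprod
          rw [← hw, hu1] at h
          simpa [sp_append, mul_assoc] using h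
        have e3 : ((c' : W) * (sp S a * (x : W))) * (sp S u' * sp S suff)
            = (sp S a) * (sp S u' * sp S suff) := by
          rw [← e2]; group
        exact mul_right_cancel e3
      -- translate into qp equation
      have hq : qp (fun y => (y : W)) c c' (k + 1) = qp (fun y => (y : W)) c' c (k + 1) := by
        rw [qp_succ (fun y => (y : W)) c' c k]
        have h5 : sp S (altP c c' (k + 1)) = (c' : W) * sp S (altP c c' k) := by
          rw [← hax, ← ha, ← hkey, ← mul_assoc, si_mul_self hinv hgen c', one_mul, sp_append]
          simp [sp]
        rw [← sp_altP, ← sp_altP, h5]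
      have hpow : ((c' : W) * c) ^ (k + 1) = 1 := by
        have h6 := qp_mul_inv (G := W) (g := fun y => (y : W))
          (fun y => si_mul_self hinv hgen y) (k + 1) c' c
        rw [← hq] at h6
        rw [← h6]
        simp
      have hdvd : orderOf ((c' : W) * c) ∣ (k + 1) := orderOf_dvd_of_pow_eq_one hpow
      have horder : orderOf ((c' : W) * c) = orderOf ((c : W) * c') :=
        SemiconjBy.orderOf_eq (c : W) (by simp [SemiconjBy, mul_assoc])
      rcases hr with hr | hr
      · have : orderOf ((c : W) * c') ≤ k + 1 :=
          Nat.le_of_dvd (by omega) (horder ▸ hdvd)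
        omega
      · rw [horder, hr] at hdvd
        omega
  · -- deleted letter inside the suffix
    refine ⟨u ++ b, ?_, ?_⟩
    · rw [altP_succ, List.cons_append, sp_cons]
      have : altP c c' r ++ (u ++ b) = a ++ b := by rw [hu1]; simp
      rw [this, ← hprod, ← mul_assoc, si_mul_self hinv hgen c', one_mul]
    · have h1 := congrArg List.length hsplit
      simp only [List.length_append, List.length_cons, altP_length] at h1 hlen ⊢
      have h2 := congrArg List.length hu1
      simp at h2
      omega

end growth
end CoxFold

namespace CoxFold

variable {W : Type*} [Group W]

theorem order_mul_symm (a b : W) : orderOf (a * b) = orderOf (b * a) :=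
  (SemiconjBy.orderOf_eq a (show a * (b * a) = (a * b) * a by rw [mul_assoc])).symm

/-- The Coxeter matrix of `(W, S)`. -/
noncomputable def cMat (S : Set W) (hinv : ∀ s ∈ S, s * s = 1 ∧ s ≠ 1) : CoxeterMatrix ↥S where
  M := Matrix.of (fun i j => orderOf ((i : W) * j))
  isSymm := by
    ext i j
    exact order_mul_symm (j : W) i
  diagonal := fun i => by
    simp only [Matrix.of_apply, (hinv i i.2).1, orderOf_one]
  off_diagonal := fun i j hij h1 => by
    rw [Matrix.of_apply, orderOf_eq_one_iff] at h1
    apply hij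
    have h2 : (i : W) * j = (i : W) * i := by rw [h1, (hinv i i.2).1]
    exact Subtype.ext (mul_left_cancel h2).symm

@[simp] theorem cMat_apply (S : Set W) (hinv : ∀ s ∈ S, s * s = 1 ∧ s ≠ 1) (i j : ↥S) :
    cMat S hinv i j = orderOf ((i : W) * j) := rfl

section main

variable {S : Set W}
  (hinv : ∀ s ∈ S, s * s = 1 ∧ s ≠ 1)
  (hgen : Subgroup.closure S = ⊤)
  (hfold : ∀ γ : W, ∀ s ∈ S, ∀ t ∈ S, ∀ n : ℕ,
      (((∃ l : List W, (∀ g ∈ l, g ∈ S) ∧ l.prod = γ ∧ l.length = n) ∧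
        ∀ l : List W, (∀ g ∈ l, g ∈ S) → l.prod = γ → n ≤ l.length)) →
      (((∃ l : List W, (∀ g ∈ l, g ∈ S) ∧ l.prod = s * γ ∧ l.length = n + 1) ∧
        ∀ l : List W, (∀ g ∈ l, g ∈ S) → l.prod = s * γ → n + 1 ≤ l.length)) →
      (((∃ l : List W, (∀ g ∈ l, g ∈ S) ∧ l.prod = γ * t ∧ l.length = n + 1) ∧
        ∀ l : List W, (∀ g ∈ l, g ∈ S) → l.prod = γ * t → n + 1 ≤ l.length)) →
      (((∃ l : List W, (∀ g ∈ l, g ∈ S) ∧ l.prod = s * γ * t ∧ l.length = n + 2) ∧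
        ∀ l : List W, (∀ g ∈ l, g ∈ S) → l.prod = s * γ * t → n + 2 ≤ l.length)) ∨
      s * γ * t = γ)
include hinv hgen hfold
set_option linter.unusedSectionVars false

theorem alt_prefix (i j : ↥S) (w : W)
    (hi : lenw S ((i : W) * w) < lenw S w) (hj : lenw S ((j : W) * w) < lenw S w) :
    ∀ r : ℕ, (r ≤ orderOf ((i : W) * j) ∨ orderOf ((i : W) * j) = 0) →
    ∃ (c c' : ↥S) (suff : List ↥S), ((c = i ∧ c' = j) ∨ (c = j ∧ c' = i)) ∧
      sp S (altP c c' r ++ suff) = w ∧ (altP c c' r ++ suff).length = lenw S w := by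
  intro r
  induction r with
  | zero =>
    intro _
    obtain ⟨l, hl, hlen⟩ := lenw_exists hinv hgen w
    exact ⟨i, j, l, Or.inl ⟨rfl, rfl⟩, by simpa using hl, by simpa using hlen⟩
  | succ r ih =>
    intro hr1
    obtain ⟨c, c', suff, hpair, hsp, hlen⟩ := ih (by
      rcases hr1 with h | h
      · exact Or.inl (by omega)
      · exact Or.inr h)
    have horder : orderOf ((c : W) * c') = orderOf ((i : W) * j) := by
      rcases hpair with ⟨rfl, rfl⟩ | ⟨rfl, rfl⟩
      · rfl
      · exact order_mul_symm _ _
    have hdesc : lenw S ((c' : W) * w) < lenw S w := by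
      rcases hpair with ⟨rfl, rfl⟩ | ⟨rfl, rfl⟩
      · exact hj
      · exact hi
    obtain ⟨suff', h1, h2⟩ := grow hinv hgen hfold c c' r suff w hsp hlen hdesc (by
      rw [horder]
      rcases hr1 with h | h
      · exact Or.inl (by omega)
      · exact Or.inr h)
    refine ⟨c', c, suff', ?_, h1, h2⟩
    rcases hpair with ⟨rfl, rfl⟩ | ⟨rfl, rfl⟩
    · exact Or.inr ⟨rfl, rfl⟩
    · exact Or.inl ⟨rfl, rfl⟩

theorem matsumoto : ∀ L : ℕ, ∀ w : W, ∀ l₁ l₂ : List ↥S,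
    lenw S w = L → sp S l₁ = w → l₁.length = L → sp S l₂ = w → l₂.length = L →
    (cMat S hinv).toCoxeterSystem.wordProd l₁ = (cMat S hinv).toCoxeterSystem.wordProd l₂ := by
  intro L
  induction L using Nat.strong_induction_on with
  | _ L IH =>
  intro w l₁ l₂ hL h1 h1l h2 h2l
  set cs0 := (cMat S hinv).toCoxeterSystem with hcs0
  -- same first letter case, as a helper
  have hsame : ∀ (c : ↥S) (t t' : List ↥S), sp S (c :: t) = w → (c :: t).length = L →
      sp S (c :: t') = w → (c :: t').length = L →
      cs0.wordProd (c :: t) = cs0.wordProd (c :: t') := by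
    intro c t t' ht hta ht' ht'a
    have hcw : (c : W) * w = sp S t := by
      rw [← ht, sp_cons, ← mul_assoc, si_mul_self hinv hgen c, one_mul]
    have hcw' : (c : W) * w = sp S t' := by
      rw [← ht', sp_cons, ← mul_assoc, si_mul_self hinv hgen c, one_mul]
    have htlen : t.length + 1 = L := by simpa using hta
    have ht'len : t'.length + 1 = L := by simpa using ht'a
    have hlcw : lenw S ((c : W) * w) = L - 1 := by
      have hub : lenw S ((c : W) * w) ≤ L - 1 := by
        have := lenw_le' t hcw.symm
        omega
      have hlb : lenw S w ≤ lenw S ((c : W) * w) + 1 := lenw_le_mul hinv hgen c w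
      omega
    rw [cs0.wordProd_cons, cs0.wordProd_cons]
    congr 1
    exact IH (L - 1) (by omega) ((c : W) * w) t t' hlcw hcw.symm (by omega) hcw'.symm (by omega)
  match l₁, l₂ with
  | [], [] => rfl
  | [], x :: t => simp at h1l h2l; omega
  | x :: t, [] => simp at h1l h2l; omega
  | i :: t₁, j :: t₂ =>
    by_cases hij : i = j
    · subst hij
      exact hsame i t₁ t₂ h1 h1l h2 h2l
    · -- distinct first letters
      have hlt₁ : t₁.length + 1 = L := by simpa using h1l
      have hiw : (i : W) * w = sp S t₁ := by
        rw [← h1, sp_cons, ← mul_assoc, si_mul_self hinv hgen i, one_mul]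
      have hjw : (j : W) * w = sp S t₂ := by
        rw [← h2, sp_cons, ← mul_assoc, si_mul_self hinv hgen j, one_mul]
      have hlt₂ : t₂.length + 1 = L := by simpa using h2l
      have hi : lenw S ((i : W) * w) < lenw S w := by
        have := lenw_le' t₁ hiw.symm
        have := lenw_mul_ne hinv hgen hfold L w hL i
        omega
      have hj : lenw S ((j : W) * w) < lenw S w := by
        have := lenw_le' t₂ hjw.symm
        have := lenw_mul_ne hinv hgen hfold L w hL j
        omega
      have hm0 : orderOf ((i : W) * j) ≠ 0 := by
        intro h0
        obtain ⟨c, c', suff, hpair, hsp, hlen⟩ :=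
          alt_prefix hinv hgen hfold i j w hi hj (L + 1) (Or.inr h0)
        simp only [List.length_append, altP_length] at hlen
        omega
      obtain ⟨c, c', suff, hpair, hsp, hlen⟩ :=
        alt_prefix hinv hgen hfold i j w hi hj (orderOf ((i : W) * j)) (Or.inl le_rfl)
      obtain ⟨m', hm'⟩ : ∃ m', orderOf ((i : W) * j) = m' + 1 :=
        ⟨orderOf ((i : W) * j) - 1, by omega⟩
      rw [hm'] at hsp hlen
      have horder : orderOf ((c : W) * c') = m' + 1 := by
        rcases hpair with ⟨rfl, rfl⟩ | ⟨rfl, rfl⟩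
        · exact hm'
        · rw [order_mul_symm]; exact hm'
      have hpowW : ((c : W) * c') ^ (m' + 1) = 1 := by
        rw [← horder]; exact pow_orderOf_eq_one _
      have hpowM : (cs0.simple c * cs0.simple c') ^ (m' + 1) = 1 := by
        have := cs0.simple_mul_simple_pow c c'
        rwa [show (cMat S hinv) c c' = m' + 1 from horder] at this
      -- the braid-equivalent word
      have hspB : sp S (altP c' c (m' + 1) ++ suff) = w := by
        rw [← hsp, sp_append, sp_append, sp_altP, sp_altP,
          qp_eq_of_pow_eq_one (fun y => si_mul_self hinv hgen y) hpowW]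
      have hlenB : (altP c' c (m' + 1) ++ suff).length = lenw S w := by
        simp only [List.length_append, altP_length] at hlen ⊢
        exact hlen
      have hfAB : cs0.wordProd (altP c c' (m' + 1) ++ suff)
          = cs0.wordProd (altP c' c (m' + 1) ++ suff) := by
        rw [cs0.wordProd_append, cs0.wordProd_append]
        congr 1
        exact qp_eq_of_pow_eq_one (fun y => cs0.simple_mul_simple_self y) hpowM
      -- rewrite the two words in cons form
      have hA : altP c c' (m' + 1) ++ suff = c :: (altP c' c m' ++ suff) := by
        rw [altP_succ, List.cons_append]
      have hB : altP c' c (m' + 1) ++ suff = c' :: (altP c c' m' ++ suff) := by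
        rw [altP_succ, List.cons_append]
      rw [hA] at hsp hlen hfAB
      rw [hB] at hspB hlenB hfAB
      rcases hpair with ⟨rfl, rfl⟩ | ⟨rfl, rfl⟩
      · calc cs0.wordProd (c :: t₁)
            = cs0.wordProd (c :: (altP c' c m' ++ suff)) :=
              hsame c t₁ _ h1 h1l hsp (by rw [hlen, hL])
          _ = cs0.wordProd (c' :: (altP c c' m' ++ suff)) := hfAB
          _ = cs0.wordProd (c' :: t₂) :=
              (hsame c' t₂ _ h2 h2l hspB (by rw [hlenB, hL])).symm
      · calc cs0.wordProd (c' :: t₁)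
            = cs0.wordProd (c' :: (altP c c' m' ++ suff)) :=
              hsame c' t₁ _ h1 h1l hspB (by rw [hlenB, hL])
          _ = cs0.wordProd (c :: (altP c' c m' ++ suff)) := hfAB.symm
          _ = cs0.wordProd (c :: t₂) :=
              (hsame c t₂ _ h2 h2l hsp (by rw [hlen, hL])).symm

end main
end CoxFold

namespace CoxFold
section final

variable {W : Type*} [Group W] {S : Set W}
  (hinv : ∀ s ∈ S, s * s = 1 ∧ s ≠ 1)
  (hgen : Subgroup.closure S = ⊤)
  (hfold : ∀ γ : W, ∀ s ∈ S, ∀ t ∈ S, ∀ n : ℕ,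
      (((∃ l : List W, (∀ g ∈ l, g ∈ S) ∧ l.prod = γ ∧ l.length = n) ∧
        ∀ l : List W, (∀ g ∈ l, g ∈ S) → l.prod = γ → n ≤ l.length)) →
      (((∃ l : List W, (∀ g ∈ l, g ∈ S) ∧ l.prod = s * γ ∧ l.length = n + 1) ∧
        ∀ l : List W, (∀ g ∈ l, g ∈ S) → l.prod = s * γ → n + 1 ≤ l.length)) →
      (((∃ l : List W, (∀ g ∈ l, g ∈ S) ∧ l.prod = γ * t ∧ l.length = n + 1) ∧
        ∀ l : List W, (∀ g ∈ l, g ∈ S) → l.prod = γ * t → n + 1 ≤ l.length)) →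
      (((∃ l : List W, (∀ g ∈ l, g ∈ S) ∧ l.prod = s * γ * t ∧ l.length = n + 2) ∧
        ∀ l : List W, (∀ g ∈ l, g ∈ S) → l.prod = s * γ * t → n + 2 ≤ l.length)) ∨
      s * γ * t = γ)
include hinv hgen hfold
set_option linter.unusedSectionVars false

/-- every word can be reduced while keeping the same image in the Coxeter group. -/
theorem reduce : ∀ l : List ↥S, ∃ lr : List ↥S, sp S lr = sp S l ∧
    lr.length = lenw S (sp S l) ∧
    (cMat S hinv).toCoxeterSystem.wordProd lr = (cMat S hinv).toCoxeterSystem.wordProd l := by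
  set cs0 := (cMat S hinv).toCoxeterSystem with hcs0
  intro l
  induction l with
  | nil => exact ⟨[], rfl, by simp, rfl⟩
  | cons i l ih =>
    obtain ⟨lr, hsp, hlen, hword⟩ := ih
    have hne : lenw S ((i : W) * sp S l) ≠ lenw S (sp S l) :=
      lenw_mul_ne hinv hgen hfold _ (sp S l) rfl i
    have hub : lenw S ((i : W) * sp S l) ≤ lenw S (sp S l) + 1 := lenw_mul_le hinv hgen i (sp S l)
    have hlb : lenw S (sp S l) ≤ lenw S ((i : W) * sp S l) + 1 := lenw_le_mul hinv hgen i (sp S l)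
    rcases lt_or_gt_of_ne hne with hlt | hgt
    · -- descent: use the exchange condition on lr
      obtain ⟨a, x, b, hsplit, hprod⟩ := exchange hinv hgen hfold lr i
        (by rw [hsp]; exact hlen) (by rw [hsp]; exact hlt)
      rw [hsp] at hprod
      refine ⟨a ++ b, ?_, ?_, ?_⟩
      · rw [← hprod, sp_cons]
      · have h1 := congrArg List.length hsplit
        simp only [List.length_append, List.length_cons] at h1
        rw [sp_cons]
        simp only [List.length_append]
        omega
      · -- Matsumoto: lr and i :: (a ++ b) are both reduced words for sp l
        have hspr : sp S (i :: (a ++ b)) = sp S l := by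
          rw [sp_cons, ← hprod, ← mul_assoc, si_mul_self hinv hgen i, one_mul]
        have hlenr : (i :: (a ++ b)).length = lenw S (sp S l) := by
          have h1 := congrArg List.length hsplit
          simp only [List.length_append, List.length_cons] at h1 ⊢
          omega
        have hmats := matsumoto hinv hgen hfold (lenw S (sp S l)) (sp S l) lr (i :: (a ++ b))
          rfl hsp hlen hspr hlenr
        rw [cs0.wordProd_cons] at hmats
        rw [cs0.wordProd_cons, ← hword, hmats, ← mul_assoc,
          cs0.simple_mul_simple_self, one_mul]
    · -- ascent: just add the letter
      refine ⟨i :: lr, ?_, ?_, ?_⟩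
      · rw [sp_cons, hsp, sp_cons]
      · rw [sp_cons]
        simp only [List.length_cons]
        omega
      · rw [cs0.wordProd_cons, cs0.wordProd_cons, hword]

/-- the canonical homomorphism from the abstract Coxeter group to `W`. -/
noncomputable def phi : (cMat S hinv).Group →* W :=
  (cMat S hinv).toCoxeterSystem.lift
    ⟨fun i => (i : W), fun i j => pow_orderOf_eq_one ((i : W) * (j : W))⟩

theorem phi_wordProd (l : List ↥S) :
    phi hinv ((cMat S hinv).toCoxeterSystem.wordProd l) = sp S l := by
  induction l with
  | nil => simp [CoxeterSystem.wordProd_nil]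
  | cons i l ih =>
    rw [CoxeterSystem.wordProd_cons, map_mul, ih, sp_cons]
    congr 1
    exact CoxeterSystem.lift_apply_simple (cMat S hinv).toCoxeterSystem _ i

theorem phi_bijective : Function.Bijective (phi (S := S) hinv) := by
  constructor
  · intro x y hxy
    obtain ⟨l₁, rfl⟩ := (cMat S hinv).toCoxeterSystem.wordProd_surjective x
    obtain ⟨l₂, rfl⟩ := (cMat S hinv).toCoxeterSystem.wordProd_surjective y
    rw [phi_wordProd hinv hgen hfold, phi_wordProd hinv hgen hfold] at hxy
    obtain ⟨lr₁, hsp₁, hlen₁, hword₁⟩ := reduce hinv hgen hfold l₁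
    obtain ⟨lr₂, hsp₂, hlen₂, hword₂⟩ := reduce hinv hgen hfold l₂
    rw [← hword₁, ← hword₂]
    exact matsumoto hinv hgen hfold (lenw S (sp S l₁)) (sp S l₁) lr₁ lr₂ rfl hsp₁ hlen₁
      (by rw [hsp₂, hxy]) (by rw [hlen₂, hxy])
  · intro w
    obtain ⟨l, hl⟩ := exists_word hinv hgen w
    exact ⟨(cMat S hinv).toCoxeterSystem.wordProd l, by rw [phi_wordProd hinv hgen hfold, hl]⟩

/-- the Coxeter system on `W` indexed by `↥S`. -/
noncomputable def csW : CoxeterSystem (cMat S hinv) W :=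
  ⟨(MulEquiv.ofBijective (phi (S := S) hinv) (phi_bijective hinv hgen hfold)).symm⟩

theorem csW_simple (i : ↥S) : (csW hinv hgen hfold).simple i = (i : W) := by
  show ((MulEquiv.ofBijective (phi (S := S) hinv)
    (phi_bijective hinv hgen hfold)).symm).symm (PresentedGroup.of i) = (i : W)
  rw [MulEquiv.symm_symm]
  show phi hinv (PresentedGroup.of i) = (i : W)
  have : (PresentedGroup.of i : (cMat S hinv).Group)
      = (cMat S hinv).toCoxeterSystem.wordProd [i] := by
    simp [CoxeterSystem.wordProd_singleton]
    rfl
  rw [this, phi_wordProd hinv hgen hfold]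
  simp

theorem range_csW_simple : Set.range (csW hinv hgen hfold).simple = S := by
  ext w
  constructor
  · rintro ⟨i, rfl⟩
    rw [csW_simple hinv hgen hfold i]
    exact i.2
  · intro hw
    exact ⟨⟨w, hw⟩, csW_simple hinv hgen hfold ⟨w, hw⟩⟩

end final
end CoxFold


/-- a group generated by a finite set of involutions satisfying the
folding condition is a Coxeter system. -/
theorem coxeter_of_folding
    {W : Type*} [Group W] (S : Set W) (hfin : S.Finite)
    (hinv : ∀ s ∈ S, s * s = 1 ∧ s ≠ 1)
    (hgen : Subgroup.closure S = ⊤)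
    (hfold : ∀ γ : W, ∀ s ∈ S, ∀ t ∈ S, ∀ n : ℕ,
      IsWordLength S γ n → IsWordLength S (s * γ) (n + 1) →
      IsWordLength S (γ * t) (n + 1) →
      IsWordLength S (s * γ * t) (n + 2) ∨ s * γ * t = γ) :
    IsCoxeterSystemOn W S := by
  classical
  haveI : Fintype ↥S := hfin.fintype
  let e : ↥S ≃ Fin (Fintype.card ↥S) := Fintype.equivFin ↥S
  have hfold' : ∀ γ : W, ∀ s ∈ S, ∀ t ∈ S, ∀ n : ℕ,
      (((∃ l : List W, (∀ g ∈ l, g ∈ S) ∧ l.prod = γ ∧ l.length = n) ∧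
        ∀ l : List W, (∀ g ∈ l, g ∈ S) → l.prod = γ → n ≤ l.length)) →
      (((∃ l : List W, (∀ g ∈ l, g ∈ S) ∧ l.prod = s * γ ∧ l.length = n + 1) ∧
        ∀ l : List W, (∀ g ∈ l, g ∈ S) → l.prod = s * γ → n + 1 ≤ l.length)) →
      (((∃ l : List W, (∀ g ∈ l, g ∈ S) ∧ l.prod = γ * t ∧ l.length = n + 1) ∧
        ∀ l : List W, (∀ g ∈ l, g ∈ S) → l.prod = γ * t → n + 1 ≤ l.length)) →
      (((∃ l : List W, (∀ g ∈ l, g ∈ S) ∧ l.prod = s * γ * t ∧ l.length = n + 2) ∧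
        ∀ l : List W, (∀ g ∈ l, g ∈ S) → l.prod = s * γ * t → n + 2 ≤ l.length)) ∨
      s * γ * t = γ := hfold
  refine ⟨Fin (Fintype.card ↥S), (CoxFold.cMat S hinv).reindex e,
    (CoxFold.csW hinv hgen hfold').reindex e, ?_⟩
  have h1 : ∀ i' : Fin (Fintype.card ↥S),
      ((CoxFold.csW hinv hgen hfold').reindex e).simple i'
      = (CoxFold.csW hinv hgen hfold').simple (e.symm i') := fun i' => rfl
  have h2 : Set.range ((CoxFold.csW hinv hgen hfold').reindex e).simple
      = Set.range ((CoxFold.csW hinv hgen hfold').simple ∘ e.symm) := by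
    congr 1
  rw [h2, Set.range_comp, e.symm.surjective.range_eq, Set.image_univ]
  exact CoxFold.range_csW_simple hinv hgen hfold'
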